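/- Let b(x,y) = 4k₁(k₁y + k₂)/(4x + k₃)², c(x,y) = (4x + k₃)/(k₁y + k₂)², μ = ν = 0, where k₁, k₂, k₃ are real constants, defined on a domain where 4x + k₃ ≠ 0 and k₁y + k₂ ≠ 0. Then the three integrability conditions -2 b_y ν - b ν_y - μ_yy + μ_x c + 2 μ c_x + ν_xx = 0, -2 b_y c - b c_y + c_xx + 2 ν_x = 0, and -2 μ_y - b_yy + b_x c + 2 b c_x = 0 all hold identically. -/

import Mathlib

noncomputable def pdx (f : ℝ × ℝ → ℝ) (p : ℝ × ℝ) : ℝ := deriv (fun t => f (t, p.2)) p.1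
noncomputable def pdy (f : ℝ × ℝ → ℝ) (p : ℝ × ℝ) : ℝ := deriv (fun t => f (p.1, t)) p.2

private lemma deriv_lin (a b' t : ℝ) : deriv (fun s => a * s + b') t = a := by
  simpa using (((hasDerivAt_id t).const_mul a).add_const b').deriv

theorem integrability_of_example_family
    (k1 k2 k3 : ℝ) (b c μ ν : ℝ × ℝ → ℝ)
    (hb : b = fun p => 4 * k1 * (k1 * p.2 + k2) / (4 * p.1 + k3) ^ 2)
    (hc : c = fun p => (4 * p.1 + k3) / (k1 * p.2 + k2) ^ 2)
    (hμ : μ = fun _ => 0) (hν : ν = fun _ => 0) :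
    ∀ p : ℝ × ℝ, 4 * p.1 + k3 ≠ 0 → k1 * p.2 + k2 ≠ 0 →
      (-2 * pdy b p * ν p - b p * pdy ν p - pdy (pdy μ) p
          + pdx μ p * c p + 2 * μ p * pdx c p + pdx (pdx ν) p = 0) ∧
      (-2 * pdy b p * c p - b p * pdy c p + pdx (pdx c) p + 2 * pdx ν p = 0) ∧
      (-2 * pdy μ p - pdy (pdy b) p + pdx b p * c p + 2 * b p * pdx c p = 0) := by
  subst hb hc hμ hν
  intro p hx hy
  obtain ⟨x, y⟩ := p
  simp only [Prod.fst, Prod.snd] at *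
  -- zero function derivatives
  have hz : ∀ q : ℝ × ℝ, pdy (fun _ : ℝ × ℝ => (0:ℝ)) q = 0 := by
    intro q; simp [pdy]
  have hzx : ∀ q : ℝ × ℝ, pdx (fun _ : ℝ × ℝ => (0:ℝ)) q = 0 := by
    intro q; simp [pdx]
  -- pdy b
  have hpdyb : ∀ q : ℝ × ℝ,
      pdy (fun p => 4 * k1 * (k1 * p.2 + k2) / (4 * p.1 + k3) ^ 2) q
        = 4 * k1 * k1 / (4 * q.1 + k3) ^ 2 := by
    intro q
    have h : (fun t => 4 * k1 * (k1 * t + k2) / (4 * q.1 + k3) ^ 2)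
        = fun t => (4 * k1 * k1 / (4 * q.1 + k3) ^ 2) * t
            + 4 * k1 * k2 / (4 * q.1 + k3) ^ 2 := by
      funext t; ring
    show deriv _ _ = _
    rw [h, deriv_lin]
  -- pdy (pdy b) = 0
  have hpdyyb : pdy (pdy (fun p => 4 * k1 * (k1 * p.2 + k2) / (4 * p.1 + k3) ^ 2)) (x, y) = 0 := by
    have h : (fun t => pdy (fun p => 4 * k1 * (k1 * p.2 + k2) / (4 * p.1 + k3) ^ 2) (x, t))
        = fun _ => 4 * k1 * k1 / (4 * x + k3) ^ 2 := by
      funext t; rw [hpdyb]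
    show deriv _ _ = _
    rw [h, deriv_const]
  -- pdx c
  have hpdxc : ∀ q : ℝ × ℝ,
      pdx (fun p => (4 * p.1 + k3) / (k1 * p.2 + k2) ^ 2) q
        = 4 / (k1 * q.2 + k2) ^ 2 := by
    intro q
    have h : (fun t => (4 * t + k3) / (k1 * q.2 + k2) ^ 2)
        = fun t => (4 / (k1 * q.2 + k2) ^ 2) * t + k3 / (k1 * q.2 + k2) ^ 2 := by
      funext t; ring
    show deriv _ _ = _
    rw [h, deriv_lin]
  -- pdx (pdx c) = 0
  have hpdxxc : pdx (pdx (fun p => (4 * p.1 + k3) / (k1 * p.2 + k2) ^ 2)) (x, y) = 0 := by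
    have h : (fun t => pdx (fun p => (4 * p.1 + k3) / (k1 * p.2 + k2) ^ 2) (t, y))
        = fun _ => 4 / (k1 * y + k2) ^ 2 := by
      funext t; rw [hpdxc]
    show deriv _ _ = _
    rw [h, deriv_const]
  -- pdy c
  have hpdyc : pdy (fun p => (4 * p.1 + k3) / (k1 * p.2 + k2) ^ 2) (x, y)
      = -(2 * k1 * (4 * x + k3)) / (k1 * y + k2) ^ 3 := by
    have hin : HasDerivAt (fun t => k1 * t + k2) k1 y := by
      simpa using ((hasDerivAt_id y).const_mul k1).add_const k2
    have hsq : HasDerivAt (fun t => (k1 * t + k2) ^ 2) (2 * (k1 * y + k2) ^ 1 * k1) y :=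
      hin.pow 2
    have h2 : HasDerivAt (fun t => (4 * x + k3) * ((k1 * t + k2) ^ 2)⁻¹)
        ((4 * x + k3) * (-(2 * (k1 * y + k2) ^ 1 * k1) / ((k1 * y + k2) ^ 2) ^ 2)) y :=
      (hsq.inv (pow_ne_zero 2 hy)).const_mul (4 * x + k3)
    have heq : (fun t => (4 * x + k3) / (k1 * t + k2) ^ 2)
        = fun t => (4 * x + k3) * ((k1 * t + k2) ^ 2)⁻¹ := by
      funext t; ring
    show deriv _ _ = _
    rw [heq, h2.deriv]
    field_simp
  -- pdx b
  have hpdxb : pdx (fun p => 4 * k1 * (k1 * p.2 + k2) / (4 * p.1 + k3) ^ 2) (x, y)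
      = -(32 * k1 * (k1 * y + k2)) / (4 * x + k3) ^ 3 := by
    have hin : HasDerivAt (fun t => 4 * t + k3) 4 x := by
      simpa using ((hasDerivAt_id x).const_mul (4:ℝ)).add_const k3
    have hsq : HasDerivAt (fun t => (4 * t + k3) ^ 2) (2 * (4 * x + k3) ^ 1 * 4) x :=
      hin.pow 2
    have h2 : HasDerivAt (fun t => (4 * k1 * (k1 * y + k2)) * ((4 * t + k3) ^ 2)⁻¹)
        ((4 * k1 * (k1 * y + k2)) * (-(2 * (4 * x + k3) ^ 1 * 4) / ((4 * x + k3) ^ 2) ^ 2)) x :=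
      (hsq.inv (pow_ne_zero 2 hx)).const_mul (4 * k1 * (k1 * y + k2))
    have heq : (fun t => 4 * k1 * (k1 * y + k2) / (4 * t + k3) ^ 2)
        = fun t => (4 * k1 * (k1 * y + k2)) * ((4 * t + k3) ^ 2)⁻¹ := by
      funext t; ring
    show deriv _ _ = _
    rw [heq, h2.deriv]
    field_simp
    ring
  refine ⟨?_, ?_, ?_⟩
  · simp [pdy, pdx]
  · simp only [hpdyb, hpdyc, hpdxxc, hzx]
    field_simp
    ring
  · simp only [hz, hpdyyb, hpdxb, hpdxc]
    field_simp
    ring
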